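/- arXiv:2604.14537 — 6 statements merged into one kernel-verified Lean document; each statement's English description precedes it below -/
import Mathlib

section
/- Let (X,d) be a metric space and μ a Borel measure on X such that every open metric ball of positive radius has positive and finite measure. Suppose μ satisfies a Bishop–Gromov type comparison: there exists n ≥ 0 such that for every point p ∈ X and all radii 0 < r ≤ R one has μ(B_R(p)) ≤ (R/r)^n · μ(B_r(p)). Then for every s ≥ 1 and any two points p, q ∈ X, limsup_{r→∞} μ(B_{rs}(p))/μ(B_r(p)) = limsup_{r→∞} μ(B_{rs}(q))/μ(B_r(q)); that is, the relative volume growth function RV(s) is independent of the choice of base point. -/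
open MeasureTheory Metric Filter

lemma RVaux_map_sub (d : ℝ) : Filter.map (fun r : ℝ => r - d) atTop = atTop := by
  rw [show (fun r : ℝ => r - d) = (⇑(OrderIso.addRight (-d) : ℝ ≃o ℝ)) from
    funext fun r => sub_eq_add_neg r d]
  exact (OrderIso.addRight (-d) : ℝ ≃o ℝ).map_atTop

lemma RVaux_le
    {X : Type*} [MetricSpace X] [MeasurableSpace X] [BorelSpace X]
    (μ : Measure X)
    (n : ℝ) (hn : 0 ≤ n)
    (hBG : ∀ (p : X) (r R : ℝ), 0 < r → r ≤ R →
      μ (ball p R) ≤ ENNReal.ofReal ((R / r) ^ n) * μ (ball p r))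
    (s : ℝ) (hs : 1 ≤ s) (p q : X) :
    limsup (fun r : ℝ => μ (ball q (r * s)) / μ (ball q r)) atTop
      ≤ limsup (fun r : ℝ => μ (ball p (r * s)) / μ (ball p r)) atTop := by
  set d := dist p q with hd
  have hd0 : 0 ≤ d := dist_nonneg
  have hs0 : 0 < s := lt_of_lt_of_le one_pos hs
  set L := limsup (fun r : ℝ => μ (ball p (r * s)) / μ (ball p r)) atTop with hL
  -- key: for every k > 1, limsup f_q ≤ ofReal (k^n) * L
  have key : ∀ k : ℝ, 1 < k →
      limsup (fun r : ℝ => μ (ball q (r * s)) / μ (ball q r)) atTop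
        ≤ ENNReal.ofReal (k ^ n) * L := by
    intro k hk
    have h1 : limsup (fun r : ℝ => μ (ball q (r * s)) / μ (ball q r)) atTop
        ≤ limsup (fun r : ℝ =>
            ENNReal.ofReal (k ^ n) * (μ (ball p ((r - d) * s)) / μ (ball p (r - d)))) atTop := by
      refine limsup_le_limsup ?_
      have hev : ∀ᶠ r : ℝ in atTop,
          max (d + 1) (d * (1 + k * s) / (s * (k - 1)) + 1) ≤ r := eventually_ge_atTop _
      filter_upwards [hev] with r hr
      have hr1 : d + 1 ≤ r := le_trans (le_max_left _ _) hr
      have hr2 : d * (1 + k * s) / (s * (k - 1)) + 1 ≤ r := le_trans (le_max_right _ _) hr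
      have hrd : 0 < r - d := by linarith
      -- r large enough so that (r*s + d) / ((r-d)*s) ≤ k
      have hden : 0 < (r - d) * s := mul_pos hrd hs0
      have hratio : (r * s + d) / ((r - d) * s) ≤ k := by
        rw [div_le_iff₀ hden]
        have hsk : 0 < s * (k - 1) := mul_pos hs0 (by linarith)
        have : d * (1 + k * s) / (s * (k - 1)) ≤ r - 1 := by linarith
        have h2 : d * (1 + k * s) ≤ (r - 1) * (s * (k - 1)) := by
          rw [div_le_iff₀ hsk] at this; linarith [this]
        nlinarith [mul_pos hrd hs0, hsk]
      have hsub1 : ball q (r * s) ⊆ ball p (r * s + d) :=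
        ball_subset_ball' (by rw [hd, dist_comm q p])
      have hsub2 : ball p (r - d) ⊆ ball q r :=
        ball_subset_ball' (by rw [← hd]; linarith)
      have hle1 : μ (ball q (r * s)) / μ (ball q r)
          ≤ μ (ball p (r * s + d)) / μ (ball p (r - d)) :=
        ENNReal.div_le_div (measure_mono hsub1) (measure_mono hsub2)
      have hle2 : μ (ball p (r * s + d))
          ≤ ENNReal.ofReal (k ^ n) * μ (ball p ((r - d) * s)) := by
        have hRr : (r - d) * s ≤ r * s + d := by nlinarith
        refine (hBG p ((r - d) * s) (r * s + d) hden hRr).trans ?_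
        exact mul_le_mul_left
          (ENNReal.ofReal_le_ofReal (Real.rpow_le_rpow (div_nonneg (by nlinarith) hden.le) hratio hn)) _
      calc μ (ball q (r * s)) / μ (ball q r)
          ≤ μ (ball p (r * s + d)) / μ (ball p (r - d)) := hle1
        _ ≤ (ENNReal.ofReal (k ^ n) * μ (ball p ((r - d) * s))) / μ (ball p (r - d)) :=
            ENNReal.div_le_div_right hle2 _
        _ = ENNReal.ofReal (k ^ n) * (μ (ball p ((r - d) * s)) / μ (ball p (r - d))) := by
            rw [mul_div_assoc]
    refine h1.trans ?_
    have h2 : limsup (fun r : ℝ =>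
        ENNReal.ofReal (k ^ n) * (μ (ball p ((r - d) * s)) / μ (ball p (r - d)))) atTop
        = ENNReal.ofReal (k ^ n) *
          limsup (fun r : ℝ => μ (ball p ((r - d) * s)) / μ (ball p (r - d))) atTop :=
      ENNReal.limsup_const_mul_of_ne_top ENNReal.ofReal_ne_top
    rw [h2]
    gcongr
    have : limsup (fun r : ℝ => μ (ball p ((r - d) * s)) / μ (ball p (r - d))) atTop
        = limsup (fun r : ℝ => μ (ball p (r * s)) / μ (ball p r))
            (Filter.map (fun r : ℝ => r - d) atTop) := by
      exact Filter.limsup_comp (fun r : ℝ => μ (ball p (r * s)) / μ (ball p r))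
        (fun r : ℝ => r - d) atTop
    rw [this, RVaux_map_sub d]
  -- take k → 1⁺
  rcases eq_or_ne L ⊤ with hLtop | hLtop
  · rw [hLtop]; exact le_top
  have htend : Tendsto (fun k : ℝ => ENNReal.ofReal (k ^ n) * L) (nhdsWithin 1 (Set.Ioi 1))
      (nhds L) := by
    have h1 : Tendsto (fun k : ℝ => ENNReal.ofReal (k ^ n)) (nhdsWithin 1 (Set.Ioi 1))
        (nhds 1) := by
      have : Tendsto (fun k : ℝ => k ^ n) (nhdsWithin 1 (Set.Ioi 1)) (nhds 1) := by
        have := (Real.continuousAt_rpow_const 1 n (Or.inl one_ne_zero)).tendsto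
        simp only [Real.one_rpow] at this
        exact this.mono_left nhdsWithin_le_nhds
      have := (ENNReal.continuous_ofReal.tendsto 1).comp this
      rwa [ENNReal.ofReal_one] at this
    have := ENNReal.Tendsto.mul_const h1 (Or.inr hLtop)
    simpa using this
  exact ge_of_tendsto htend (eventually_nhdsWithin_of_forall fun k hk => key k hk)


/-- **Base-point independence of the relative volume growth function.**
If a Borel measure on a metric space gives every open ball of positive radius
positive and finite measure, and satisfies a Bishop–Gromov type comparison
`μ(B_R(p)) ≤ (R/r)^n · μ(B_r(p))` for `0 < r ≤ R`, then for every `s ≥ 1` the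
relative volume growth `RV(s) = limsup_{r→∞} μ(B_{rs}(p))/μ(B_r(p))` does not
depend on the base point `p`. -/
theorem relative_volume_growth_base_point_independent
    {X : Type*} [MetricSpace X] [MeasurableSpace X] [BorelSpace X]
    (μ : Measure X)
    (hpos : ∀ (p : X) (r : ℝ), 0 < r → 0 < μ (ball p r))
    (hfin : ∀ (p : X) (r : ℝ), 0 < r → μ (ball p r) < ⊤)
    (n : ℝ) (hn : 0 ≤ n)
    (hBG : ∀ (p : X) (r R : ℝ), 0 < r → r ≤ R →
      μ (ball p R) ≤ ENNReal.ofReal ((R / r) ^ n) * μ (ball p r))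
    (s : ℝ) (hs : 1 ≤ s) (p q : X) :
    limsup (fun r : ℝ => μ (ball p (r * s)) / μ (ball p r)) atTop
      = limsup (fun r : ℝ => μ (ball q (r * s)) / μ (ball q r)) atTop := by
  exact le_antisymm (RVaux_le μ n hn hBG s hs q p) (RVaux_le μ n hn hBG s hs p q)
end

section
/- Let (X,d) be a metric space, p ∈ X a base point, and μ a Borel measure on X such that every open ball B_r(p) with r > 0 has positive and finite measure. Let β > 0 and define RV(s) := limsup_{r→∞} μ(B_{rs}(p))/μ(B_r(p)) for s ≥ 1. If liminf_{s→∞} RV(s)/s^β = L < 1, then lim_{r→∞} μ(B_r(p))/r^β = 0. -/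
open MeasureTheory Metric Filter
open scoped ENNReal

/-- **Relative volume growth controls absolute volume growth.**
Let `μ` be a Borel measure on a metric space such that all balls around a base
point `p` of positive radius have positive finite measure, and let `β > 0`.
If `liminf_{s→∞} RV(s)/s^β = L < 1`, where
`RV(s) = limsup_{r→∞} μ(B_{rs}(p))/μ(B_r(p))`, then
`lim_{r→∞} μ(B_r(p))/r^β = 0`. -/
theorem rel_volume_growth_controls_abs_volume_growth
    {X : Type*} [MetricSpace X] [MeasurableSpace X] [BorelSpace X]
    (μ : Measure X) (p : X)
    (hpos : ∀ r : ℝ, 0 < r → 0 < μ (ball p r))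
    (hfin : ∀ r : ℝ, 0 < r → μ (ball p r) < ⊤)
    (β : ℝ) (hβ : 0 < β) (L : ℝ≥0∞) (hL : L < 1)
    (hliminf :
      liminf (fun s : ℝ =>
        (limsup (fun r : ℝ => μ (ball p (r * s)) / μ (ball p r)) atTop)
          / ENNReal.ofReal (s ^ β)) atTop = L) :
    Tendsto (fun r : ℝ => μ (ball p r) / ENNReal.ofReal (r ^ β)) atTop (nhds 0) := by
  obtain ⟨c, hLc, hc1⟩ := exists_between hL
  -- find a large s with RV(s)/s^β < c
  have hfreq : ∃ᶠ s : ℝ in atTop,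
      (limsup (fun r : ℝ => μ (ball p (r * s)) / μ (ball p r)) atTop)
        / ENNReal.ofReal (s ^ β) < c := by
    apply frequently_lt_of_liminf_lt ⟨⊤, fun a _ => le_top⟩
    rw [hliminf]; exact hLc
  obtain ⟨s, hs2, hsf⟩ := ((eventually_ge_atTop (2 : ℝ)).and_frequently hfreq).exists
  have hs0 : (0 : ℝ) < s := by linarith
  have hs1 : (1 : ℝ) < s := by linarith
  have hφs0 : ENNReal.ofReal (s ^ β) ≠ 0 := by
    simp [ENNReal.ofReal_eq_zero, not_le, Real.rpow_pos_of_pos hs0]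
  have hφstop : ENNReal.ofReal (s ^ β) ≠ ∞ := ENNReal.ofReal_ne_top
  set K : ℝ≥0∞ := c * ENNReal.ofReal (s ^ β) with hKdef
  have hK : limsup (fun r : ℝ => μ (ball p (r * s)) / μ (ball p r)) atTop < K :=
    (ENNReal.div_lt_iff (Or.inl hφs0) (Or.inl hφstop)).mp hsf
  have hev : ∀ᶠ r : ℝ in atTop, μ (ball p (r * s)) / μ (ball p r) < K :=
    eventually_lt_of_limsup_lt hK
  obtain ⟨R1, hR1⟩ := eventually_atTop.mp hev
  set R0 : ℝ := max R1 1 with hR0def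
  have hR0pos : (0 : ℝ) < R0 := lt_of_lt_of_le one_pos (le_max_right _ _)
  have key : ∀ r : ℝ, R0 ≤ r → μ (ball p (r * s)) ≤ K * μ (ball p r) := by
    intro r hr
    have hr0 : (0 : ℝ) < r := lt_of_lt_of_le hR0pos hr
    have h := hR1 r (le_trans (le_max_left _ _) hr)
    rw [ENNReal.div_lt_iff (Or.inl (hpos r hr0).ne') (Or.inl (hfin r hr0).ne)] at h
    exact h.le
  -- iterate
  have A : ∀ n : ℕ, ∀ r : ℝ, R0 ≤ r → r ≤ R0 * s →
      μ (ball p (r * s ^ n)) ≤ K ^ n * μ (ball p (R0 * s)) := by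
    intro n
    induction n with
    | zero =>
      intro r h1 h2
      simpa using measure_mono (ball_subset_ball (by simpa using h2))
    | succ n ih =>
      intro r h1 h2
      have hsn : (1 : ℝ) ≤ s ^ n := one_le_pow₀ hs1.le
      have h3 : R0 ≤ r * s ^ n := by
        calc R0 ≤ r := h1
          _ = r * 1 := (mul_one r).symm
          _ ≤ r * s ^ n := by
              apply mul_le_mul_of_nonneg_left hsn (by linarith)
      calc μ (ball p (r * s ^ (n + 1))) = μ (ball p ((r * s ^ n) * s)) := by ring_nf
        _ ≤ K * μ (ball p (r * s ^ n)) := key _ h3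
        _ ≤ K * (K ^ n * μ (ball p (R0 * s))) := mul_le_mul_right (ih r h1 h2) K
        _ = K ^ (n + 1) * μ (ball p (R0 * s)) := by ring
  -- ofReal multiplicativity
  have hφmul : ∀ a b : ℝ, 0 < a → 0 < b →
      ENNReal.ofReal ((a * b) ^ β) = ENNReal.ofReal (a ^ β) * ENNReal.ofReal (b ^ β) := by
    intro a b ha hb
    rw [Real.mul_rpow ha.le hb.le, ENNReal.ofReal_mul (Real.rpow_nonneg ha.le β)]
  have hφpow : ∀ m : ℕ, ENNReal.ofReal ((s ^ m : ℝ) ^ β) = (ENNReal.ofReal (s ^ β)) ^ m := by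
    intro m
    rw [← Real.rpow_natCast s m, ← Real.rpow_mul hs0.le, mul_comm, Real.rpow_mul hs0.le,
      Real.rpow_natCast, ENNReal.ofReal_pow (Real.rpow_nonneg hs0.le β)]
  set M : ℝ≥0∞ := μ (ball p (R0 * s)) / ENNReal.ofReal (R0 ^ β) with hMdef
  have main : ∀ m : ℕ, ∀ r : ℝ, R0 * s ^ m ≤ r → r ≤ R0 * s ^ (m + 1) →
      μ (ball p r) / ENNReal.ofReal (r ^ β) ≤ c ^ m * M := by
    intro m r h1 h2
    have hsm : (0 : ℝ) < s ^ m := by positivity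
    have hr0 : (0 : ℝ) < r := lt_of_lt_of_le (by positivity) h1
    have h1' : R0 ≤ r / s ^ m := (le_div_iff₀ hsm).2 (by linarith [h1])
    have h2' : r / s ^ m ≤ R0 * s := by
      rw [div_le_iff₀ hsm]
      calc r ≤ R0 * s ^ (m + 1) := h2
        _ = R0 * s * s ^ m := by ring
    have hVr : μ (ball p r) ≤ K ^ m * μ (ball p (R0 * s)) := by
      have h := A m (r / s ^ m) h1' h2'
      rwa [div_mul_cancel₀ _ hsm.ne'] at h
    have hden : ENNReal.ofReal ((R0 * s ^ m) ^ β) ≤ ENNReal.ofReal (r ^ β) :=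
      ENNReal.ofReal_le_ofReal (Real.rpow_le_rpow (by positivity) h1 hβ.le)
    calc μ (ball p r) / ENNReal.ofReal (r ^ β)
        ≤ (K ^ m * μ (ball p (R0 * s))) / ENNReal.ofReal ((R0 * s ^ m) ^ β) :=
          ENNReal.div_le_div hVr hden
      _ = c ^ m * M := by
          rw [hφmul R0 (s ^ m) hR0pos hsm, hφpow m, hKdef, mul_pow,
            mul_comm (ENNReal.ofReal (R0 ^ β)) ((ENNReal.ofReal (s ^ β)) ^ m),
            show c ^ m * (ENNReal.ofReal (s ^ β)) ^ m * μ (ball p (R0 * s))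
              = (ENNReal.ofReal (s ^ β)) ^ m * (c ^ m * μ (ball p (R0 * s))) by ring,
            ENNReal.mul_div_mul_left _ _ (pow_ne_zero m hφs0) (ENNReal.pow_ne_top hφstop),
            mul_div_assoc, hMdef]
  -- conclude
  rw [ENNReal.tendsto_nhds_zero]
  intro ε hε
  have hc0 : c < 1 := hc1
  have htend : Tendsto (fun n : ℕ => c ^ n * M) atTop (nhds 0) := by
    have h1 := ENNReal.tendsto_pow_atTop_nhds_zero_of_lt_one hc0
    have hM : M ≠ ∞ := (ENNReal.div_lt_top (hfin _ (by positivity)).ne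
      (by simp [ENNReal.ofReal_eq_zero, not_le, Real.rpow_pos_of_pos hR0pos])).ne
    simpa using ENNReal.Tendsto.mul_const h1 (Or.inr hM)
  obtain ⟨n, hn⟩ := (htend.eventually_lt_const hε).exists
  filter_upwards [eventually_ge_atTop (R0 * s ^ n)] with r hr
  have hsn1 : (1 : ℝ) ≤ s ^ n := one_le_pow₀ hs1.le
  have hrR0 : R0 ≤ r := by nlinarith
  have hx1 : (1 : ℝ) ≤ r / R0 := (le_div_iff₀ hR0pos).2 (by linarith)
  have hxn : s ^ n ≤ r / R0 := (le_div_iff₀ hR0pos).2 (by nlinarith)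
  obtain ⟨m, hm1, hm2⟩ := exists_nat_pow_near hx1 hs1
  have hnm : n ≤ m := by
    by_contra h
    push_neg at h
    have : r / R0 < r / R0 := lt_of_lt_of_le hm2 (le_trans (pow_le_pow_right₀ hs1.le (by omega)) hxn)
    exact lt_irrefl _ this
  have hb1 : R0 * s ^ m ≤ r := by
    have := (le_div_iff₀ hR0pos).1 hm1
    linarith
  have hb2 : r ≤ R0 * s ^ (m + 1) := by
    have := (div_le_iff₀ hR0pos).1 hm2.le
    linarith
  calc μ (ball p r) / ENNReal.ofReal (r ^ β) ≤ c ^ m * M := main m r hb1 hb2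
    _ ≤ c ^ n * M := mul_le_mul_left (pow_le_pow_right_of_le_one' hc0.le hnm) M
    _ ≤ ε := hn.le
end

section
/- Let N > 1 be a real number and let ρ : (0,∞) → (0,∞) be such that the function r ↦ ρ(r)^{1/N} is concave on (0,∞), and suppose ρ(r)/r → 0 as r → ∞. Let D : (0,∞) → ℝ be a function such that for every r > 0, D(r) is the right derivative of ρ at r (i.e., HasDerivWithinAt ρ (D r) (Ioi r) r for all r > 0). Then D(r) → 0 as r → ∞. -/
open Set Filter

/-- **Step 1 of the sub-quadratic volume lemma.** If `N > 1`, `ρ : (0,∞) → (0,∞)`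
has concave `N`-th root on `(0,∞)` and satisfies `ρ(r)/r → 0` as `r → ∞`, then
the right derivative of `ρ` tends to `0` at infinity. -/
theorem cd_density_right_deriv_tendsto_zero
    (N : ℝ) (hN : 1 < N) (ρ : ℝ → ℝ)
    (hpos : ∀ r ∈ Ioi (0:ℝ), 0 < ρ r)
    (hconc : ConcaveOn ℝ (Ioi 0) (fun r => ρ r ^ (1 / N)))
    (hsub : Tendsto (fun r : ℝ => ρ r / r) atTop (nhds 0))
    (D : ℝ → ℝ)
    (hD : ∀ r ∈ Ioi (0:ℝ), HasDerivWithinAt ρ (D r) (Ioi r) r) :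
    Tendsto D atTop (nhds 0) := by
  have hN0 : (0:ℝ) < N := by linarith
  set g : ℝ → ℝ := fun r => ρ r ^ (1 / N) with hg
  have hgpos : ∀ r ∈ Ioi (0:ℝ), 0 < g r := fun r hr => Real.rpow_pos_of_pos (hpos r hr) _
  -- g is nondecreasing on (0, ∞)
  have hgmono : ∀ x ∈ Ioi (0:ℝ), ∀ y ∈ Ioi (0:ℝ), x < y → g x ≤ g y := by
    intro x hx y hy hxy
    by_contra hlt
    push_neg at hlt
    set d := g x - g y with hd
    have hd0 : 0 < d := by simp [hd]; linarith
    set z := y + (y - x) * (g y / d + 1) with hz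
    have hgy0 : 0 < g y := hgpos y hy
    have hyx : 0 < y - x := by linarith
    have hzy : y < z := by
      have : 0 < (y - x) * (g y / d + 1) := mul_pos hyx (by positivity)
      simp [hz]; linarith
    have hzmem : z ∈ Ioi (0:ℝ) := lt_trans hy hzy
    have hslope := hconc.slope_anti_adjacent hx hzmem hxy hzy
    -- (g z - g y)/(z - y) ≤ (g y - g x)/(y - x) = -d/(y-x)
    have hzy' : 0 < z - y := by linarith
    have h1 : g z - g y ≤ (z - y) * ((g y - g x) / (y - x)) := by
      rw [div_le_div_iff₀ hzy' hyx] at hslope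
      calc g z - g y = (g z - g y) * (y - x) / (y - x) := by field_simp
        _ ≤ (g y - g x) * (z - y) / (y - x) := by
            apply div_le_div_of_nonneg_right _ hyx.le |>.trans_eq rfl; linarith
        _ = (z - y) * ((g y - g x) / (y - x)) := by ring
    have hzyval : z - y = (y - x) * (g y / d + 1) := by simp [hz]
    have : g z ≤ -d := by
      have : (z - y) * ((g y - g x) / (y - x)) = -(g y + d) := by
        rw [hzyval]; field_simp; ring
      nlinarith [h1]
    have := hgpos z hzmem
    linarith
  -- ρ r = (g r) ^ N on (0, ∞)
  have hρeq : ∀ r ∈ Ioi (0:ℝ), ρ r = g r ^ N := by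
    intro r hr
    rw [hg]
    rw [← Real.rpow_mul (hpos r hr).le]
    rw [one_div_mul_cancel (ne_of_gt hN0), Real.rpow_one]
  -- ρ is nondecreasing on (0, ∞)
  have hρmono : ∀ x ∈ Ioi (0:ℝ), ∀ y ∈ Ioi (0:ℝ), x < y → ρ x ≤ ρ y := by
    intro x hx y hy hxy
    rw [hρeq x hx, hρeq y hy]
    exact Real.rpow_le_rpow (hgpos x hx).le (hgmono x hx y hy hxy) hN0.le
  -- Lower bound: D s ≥ 0 for s > 0
  have hDlow : ∀ s ∈ Ioi (0:ℝ), 0 ≤ D s := by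
    intro s hs
    have hslope := (hasDerivWithinAt_iff_tendsto_slope' (notMem_Ioi.mpr le_rfl)).1 (hD s hs)
    refine ge_of_tendsto hslope ?_
    filter_upwards [eventually_mem_nhdsWithin] with t ht
    rw [slope_def_field]
    have hts : s < t := ht
    have : ρ s ≤ ρ t := hρmono s hs t (lt_trans hs hts) hts
    apply div_nonneg (by linarith) (by linarith)
  -- Upper bound: D s ≤ 2 * N * (ρ s / s) for s > 0
  have hDup : ∀ s ∈ Ioi (0:ℝ), D s ≤ 2 * N * (ρ s / s) := by
    intro s hs
    have hs0 : (0:ℝ) < s := hs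
    set h : ℝ → ℝ := fun t => ρ s * (1 + 2 / s * (t - s)) ^ N with hh
    -- h has derivative ρ s * ((2/s) * N * 1 ^ (N-1)) at s
    have hf : HasDerivAt (fun t : ℝ => 1 + 2 / s * (t - s)) (2 / s) s := by
      have := (((hasDerivAt_id s).sub_const s).const_mul (2 / s)).const_add 1
      simpa using this
    have hfd : HasDerivAt h (ρ s * (2 / s * N * (1:ℝ) ^ (N - 1))) s := by
      have hfs : (1:ℝ) + 2 / s * (s - s) = 1 := by ring
      have := (hf.rpow_const (p := N) (by rw [hfs]; exact Or.inl one_ne_zero)).const_mul (ρ s)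
      rw [hfs] at this
      exact this
    have hval : ρ s * (2 / s * N * (1:ℝ) ^ (N - 1)) = 2 * N * (ρ s / s) := by
      rw [Real.one_rpow]; field_simp
    rw [hval] at hfd
    have hhslope : Tendsto (slope h s) (nhdsWithin s (Ioi s)) (nhds (2 * N * (ρ s / s))) :=
      (hasDerivWithinAt_iff_tendsto_slope' (notMem_Ioi.mpr le_rfl)).1 (hfd.hasDerivWithinAt)
    have hρslope := (hasDerivWithinAt_iff_tendsto_slope' (notMem_Ioi.mpr le_rfl)).1 (hD s hs)
    refine le_of_tendsto_of_tendsto hρslope hhslope ?_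
    filter_upwards [eventually_mem_nhdsWithin] with t ht
    have hts : s < t := ht
    have ht0 : t ∈ Ioi (0:ℝ) := lt_trans hs0 hts
    -- key inequality: ρ t ≤ h t
    have hs2 : s / 2 ∈ Ioi (0:ℝ) := by simp; linarith
    have hslope2 := hconc.slope_anti_adjacent hs2 ht0 (by linarith : s / 2 < s) hts
    have hgs2pos : 0 < g (s / 2) := hgpos _ hs2
    have hgspos : 0 < g s := hgpos s hs
    have hchord : g t ≤ g s * (1 + 2 / s * (t - s)) := by
      have h2 : (g s - g (s / 2)) / (s - s / 2) ≤ 2 / s * g s := by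
        rw [div_le_iff₀ (by linarith : (0:ℝ) < s - s / 2)]
        have : 2 / s * g s * (s - s / 2) = g s := by field_simp; ring
        rw [this]; linarith
      have h3 : (g t - g s) / (t - s) ≤ 2 / s * g s := le_trans hslope2 h2
      rw [div_le_iff₀ (by linarith : (0:ℝ) < t - s)] at h3
      nlinarith
    have hbase : (0:ℝ) ≤ 1 + 2 / s * (t - s) := by
      have : 0 < 2 / s * (t - s) := by
        apply mul_pos (by positivity); linarith
      linarith
    have hkey : ρ t ≤ h t := by
      rw [hρeq t ht0, hh]
      calc g t ^ N ≤ (g s * (1 + 2 / s * (t - s))) ^ N :=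
            Real.rpow_le_rpow (hgpos t ht0).le hchord hN0.le
        _ = g s ^ N * (1 + 2 / s * (t - s)) ^ N := Real.mul_rpow hgspos.le hbase
        _ = ρ s * (1 + 2 / s * (t - s)) ^ N := by rw [hρeq s hs]
    have hhs : h s = ρ s := by
      simp [hh, Real.one_rpow]
    rw [slope_def_field, slope_def_field, hhs]
    apply div_le_div_of_nonneg_right _ (by linarith : (0:ℝ) ≤ t - s)
    linarith
  -- Squeeze
  have hlim : Tendsto (fun s : ℝ => 2 * N * (ρ s / s)) atTop (nhds 0) := by
    have := hsub.const_mul (2 * N)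
    simpa using this
  refine tendsto_of_tendsto_of_tendsto_of_le_of_le' tendsto_const_nhds hlim ?_ ?_
  · filter_upwards [eventually_gt_atTop (0:ℝ)] with s hs using hDlow s hs
  · filter_upwards [eventually_gt_atTop (0:ℝ)] with s hs using hDup s hs
end

section
/- Let N > 1 be a real number, and let (δ_k)_{k≥0} and (ε_k)_{k≥0} be sequences of real numbers such that 0 < δ_0 ≤ 1, δ_k > 0 for all k, 0 ≤ ε_k ≤ min(δ_k^{1/(N−1)}, 0.1) for all k, and 2·δ_{k+1} ≤ δ_k·(1 + ε_k) for all k. Then for all k ≥ 0: δ_k ≤ 0.55^k·δ_0, and moreover 2^k·δ_k ≤ δ_0·exp( δ_0^{1/(N−1)} / (1 − 0.55^{1/(N−1)}) ). -/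
/-- **Iteration estimate behind the halving estimate (Abresch–Gromoll
bootstrap).** Let `N > 1` and let `(δ_k)`, `(ε_k)` be sequences with
`0 < δ_0 ≤ 1`, `δ_k > 0`, `0 ≤ ε_k ≤ min(δ_k^{1/(N-1)}, 0.1)` and
`2·δ_{k+1} ≤ δ_k·(1 + ε_k)`. Then `δ_k ≤ 0.55^k·δ_0` and
`2^k·δ_k ≤ δ_0·exp(δ_0^{1/(N-1)} / (1 − 0.55^{1/(N-1)}))` for every `k`. -/
theorem halving_iteration_estimate
    (N : ℝ) (hN : 1 < N) (δ ε : ℕ → ℝ)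
    (hδ0 : 0 < δ 0) (hδ01 : δ 0 ≤ 1)
    (hδpos : ∀ k, 0 < δ k)
    (hεnn : ∀ k, 0 ≤ ε k)
    (hεle : ∀ k, ε k ≤ min (δ k ^ (1 / (N - 1))) 0.1)
    (hrec : ∀ k, 2 * δ (k + 1) ≤ δ k * (1 + ε k)) :
    ∀ k : ℕ, δ k ≤ (0.55 : ℝ) ^ k * δ 0 ∧
      (2 : ℝ) ^ k * δ k ≤
        δ 0 * Real.exp (δ 0 ^ (1 / (N - 1)) / (1 - (0.55 : ℝ) ^ (1 / (N - 1)))) := by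
  set p : ℝ := 1 / (N - 1) with hp
  have hppos : 0 < p := by
    have : 0 < N - 1 := by linarith
    positivity
  -- geometric decay
  have hdecay : ∀ k, δ k ≤ (0.55 : ℝ) ^ k * δ 0 := by
    intro k
    induction k with
    | zero => simp
    | succ k ih =>
      have h1 : 2 * δ (k + 1) ≤ δ k * (1 + ε k) := hrec k
      have hε : ε k ≤ 0.1 := le_trans (hεle k) (min_le_right _ _)
      have h2 : δ k * (1 + ε k) ≤ δ k * 1.1 := by
        apply mul_le_mul_of_nonneg_left (by linarith) (hδpos k).le
      have : δ (k + 1) ≤ 0.55 * δ k := by nlinarith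
      calc δ (k + 1) ≤ 0.55 * δ k := this
        _ ≤ 0.55 * ((0.55 : ℝ) ^ k * δ 0) := by nlinarith
        _ = (0.55 : ℝ) ^ (k + 1) * δ 0 := by ring
  set r : ℝ := (0.55 : ℝ) ^ p with hr
  have hr0 : 0 < r := Real.rpow_pos_of_pos (by norm_num) p
  have hr1 : r < 1 := Real.rpow_lt_one (by norm_num) (by norm_num) hppos
  -- bound on ε i
  have hεbound : ∀ i, ε i ≤ r ^ i * δ 0 ^ p := by
    intro i
    have h1 : ε i ≤ δ i ^ p := le_trans (hεle i) (min_le_left _ _)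
    have h2 : δ i ^ p ≤ ((0.55 : ℝ) ^ i * δ 0) ^ p :=
      Real.rpow_le_rpow (hδpos i).le (hdecay i) hppos.le
    have h3 : ((0.55 : ℝ) ^ i * δ 0) ^ p = r ^ i * δ 0 ^ p := by
      rw [Real.mul_rpow (by positivity) hδ0.le, hr,
        ← Real.rpow_natCast (0.55 : ℝ) i, ← Real.rpow_mul (by norm_num),
        mul_comm (i : ℝ) p, Real.rpow_mul (by norm_num), Real.rpow_natCast]
    linarith [h3 ▸ h2]
  -- partial sums of ε bounded
  have hsum : ∀ k, ∑ i ∈ Finset.range k, ε i ≤ δ 0 ^ p / (1 - r) := by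
    intro k
    have h1 : ∑ i ∈ Finset.range k, ε i ≤ ∑ i ∈ Finset.range k, r ^ i * δ 0 ^ p :=
      Finset.sum_le_sum fun i _ => hεbound i
    have h2 : ∑ i ∈ Finset.range k, r ^ i * δ 0 ^ p
        = (∑ i ∈ Finset.range k, r ^ i) * δ 0 ^ p := by
      rw [Finset.sum_mul]
    have h3 : ∑ i ∈ Finset.range k, r ^ i ≤ 1 / (1 - r) := by
      have hgeom : ∑ i ∈ Finset.range k, r ^ i = (1 - r ^ k) / (1 - r) := by
        rw [geom_sum_eq (ne_of_lt hr1)]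
        rw [div_eq_div_iff (by linarith) (by linarith)]
        ring
      rw [hgeom]
      apply div_le_div_of_nonneg_right ?_ (by linarith) |>.trans_eq rfl
      · have : 0 ≤ r ^ k := pow_nonneg hr0.le k
        linarith
    have hd0p : 0 ≤ δ 0 ^ p := Real.rpow_nonneg hδ0.le p
    calc ∑ i ∈ Finset.range k, ε i ≤ (∑ i ∈ Finset.range k, r ^ i) * δ 0 ^ p := by
          rw [← h2]; exact h1
      _ ≤ (1 / (1 - r)) * δ 0 ^ p := mul_le_mul_of_nonneg_right h3 hd0p
      _ = δ 0 ^ p / (1 - r) := by ring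
  -- main induction: 2^k δ k ≤ δ 0 * exp (∑ ε)
  have hmain : ∀ k, (2 : ℝ) ^ k * δ k ≤ δ 0 * Real.exp (∑ i ∈ Finset.range k, ε i) := by
    intro k
    induction k with
    | zero => simp
    | succ k ih =>
      have h1 : (2 : ℝ) ^ (k + 1) * δ (k + 1) ≤ (2 : ℝ) ^ k * (δ k * (1 + ε k)) := by
        have := hrec k
        have h2k : (0 : ℝ) < 2 ^ k := by positivity
        calc (2 : ℝ) ^ (k + 1) * δ (k + 1) = 2 ^ k * (2 * δ (k + 1)) := by ring
          _ ≤ 2 ^ k * (δ k * (1 + ε k)) := by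
              exact mul_le_mul_of_nonneg_left this h2k.le
      have h1ε : (0 : ℝ) ≤ 1 + ε k := by linarith [hεnn k]
      have h2 : (2 : ℝ) ^ k * (δ k * (1 + ε k)) = ((2 : ℝ) ^ k * δ k) * (1 + ε k) := by ring
      have h3 : ((2 : ℝ) ^ k * δ k) * (1 + ε k)
          ≤ (δ 0 * Real.exp (∑ i ∈ Finset.range k, ε i)) * (1 + ε k) :=
        mul_le_mul_of_nonneg_right ih h1ε
      have h4 : 1 + ε k ≤ Real.exp (ε k) := by
        have := Real.add_one_le_exp (ε k); linarith
      have h5 : (δ 0 * Real.exp (∑ i ∈ Finset.range k, ε i)) * (1 + ε k)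
          ≤ (δ 0 * Real.exp (∑ i ∈ Finset.range k, ε i)) * Real.exp (ε k) := by
        apply mul_le_mul_of_nonneg_left h4 (by positivity)
      calc (2 : ℝ) ^ (k + 1) * δ (k + 1)
          ≤ ((2 : ℝ) ^ k * δ k) * (1 + ε k) := h2 ▸ h1
        _ ≤ (δ 0 * Real.exp (∑ i ∈ Finset.range k, ε i)) * (1 + ε k) := h3
        _ ≤ (δ 0 * Real.exp (∑ i ∈ Finset.range k, ε i)) * Real.exp (ε k) := h5
        _ = δ 0 * Real.exp (∑ i ∈ Finset.range (k + 1), ε i) := by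
            rw [Finset.sum_range_succ, Real.exp_add]; ring
  intro k
  refine ⟨hdecay k, ?_⟩
  calc (2 : ℝ) ^ k * δ k ≤ δ 0 * Real.exp (∑ i ∈ Finset.range k, ε i) := hmain k
    _ ≤ δ 0 * Real.exp (δ 0 ^ p / (1 - r)) :=
        mul_le_mul_of_nonneg_left (Real.exp_le_exp.mpr (hsum k)) hδ0.le
end

section
/- Let N > 1 be a real number and ρ : (0,∞) → (0,∞) a function such that r ↦ ρ(r)^{1/N} is concave on (0,∞), and suppose ρ(r)/r → ∞ as r → 0⁺. Let L : (0,∞) → ℝ be a function such that for every x > 0, L(x) is the right derivative of x ↦ log ρ(x) at x (i.e., HasDerivWithinAt (log ∘ ρ) (L x) (Ioi x) x for all x > 0; such L exists since log ρ is concave). Let f : (0,∞) → (0,∞) and let b : (0,∞) → ℝ be locally square-integrable on (0,∞) such that: (i) log f(t) − log f(s) = ∫_s^t b(u) du for all 0 < s < t; and (ii) ∫_s^t b(u)² du ≤ L(s) − L(t) for all 0 < s < t. Then f(r)/r → ∞ as r → 0⁺. -/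
set_option maxHeartbeats 1600000

open Set Filter intervalIntegral

/-- **Superlinear density forces superlinear warping function
(Lemma fSuperlinear).** Let `N > 1` and `ρ : (0,∞) → (0,∞)` with `ρ^{1/N}`
concave on `(0,∞)` and `ρ(r)/r → ∞` as `r → 0⁺`. Let `L(x)` be the right
derivative of `log ρ` at each `x > 0`. Let `f : (0,∞) → (0,∞)` and let
`b` be locally square-integrable on `(0,∞)` with
`log f(t) − log f(s) = ∫_s^t b` and `∫_s^t b² ≤ L(s) − L(t)` for all
`0 < s < t`. Then `f(r)/r → ∞` as `r → 0⁺`. -/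
theorem warping_superlinear_of_density_superlinear
    (N : ℝ) (hN : 1 < N) (ρ : ℝ → ℝ)
    (hρpos : ∀ r ∈ Ioi (0:ℝ), 0 < ρ r)
    (hconc : ConcaveOn ℝ (Ioi 0) (fun r => ρ r ^ (1 / N)))
    (hρsuper : Tendsto (fun r : ℝ => ρ r / r) (nhdsWithin 0 (Ioi 0)) atTop)
    (L : ℝ → ℝ)
    (hL : ∀ x ∈ Ioi (0:ℝ),
      HasDerivWithinAt (fun y => Real.log (ρ y)) (L x) (Ioi x) x)
    (f : ℝ → ℝ) (hfpos : ∀ r ∈ Ioi (0:ℝ), 0 < f r)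
    (b : ℝ → ℝ)
    (hb : MeasureTheory.LocallyIntegrableOn (fun u => (b u) ^ 2) (Ioi 0))
    (hlog : ∀ s t : ℝ, 0 < s → s < t →
      Real.log (f t) - Real.log (f s) = ∫ u in s..t, b u)
    (hb2 : ∀ s t : ℝ, 0 < s → s < t →
      (∫ u in s..t, (b u) ^ 2) ≤ L s - L t) :
    Tendsto (fun r : ℝ => f r / r) (nhdsWithin 0 (Ioi 0)) atTop := by
  have hN0 : (0:ℝ) < N := by linarith
  set g : ℝ → ℝ := fun r => Real.log (ρ r) with hgdef
  have hL' : ∀ x ∈ Ioi (0:ℝ), HasDerivWithinAt g (L x) (Ioi x) x := hL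
  have hhpos : ∀ r ∈ Ioi (0:ℝ), 0 < ρ r ^ (1 / N) := fun r hr =>
    Real.rpow_pos_of_pos (hρpos r hr) _
  have hglog : ∀ r ∈ Ioi (0:ℝ), g r = N * Real.log (ρ r ^ (1 / N)) := by
    intro r hr
    rw [hgdef]
    rw [Real.log_rpow (hρpos r hr)]
    field_simp
  -- Step A : concavity of g = log ∘ ρ
  have hgc : ConcaveOn ℝ (Ioi 0) g := by
    refine ⟨convex_Ioi 0, ?_⟩
    intro x hx y hy a c ha hc hac
    have hz : a • x + c • y ∈ Ioi (0:ℝ) := (convex_Ioi 0) hx hy ha hc hac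
    have h1 : a • (ρ x ^ (1/N)) + c • (ρ y ^ (1/N)) ≤ ρ (a • x + c • y) ^ (1/N) :=
      hconc.2 hx hy ha hc hac
    have hxp := hhpos x hx
    have hyp := hhpos y hy
    have hcomb : (0:ℝ) < a • (ρ x ^ (1/N)) + c • (ρ y ^ (1/N)) := by
      rcases eq_or_lt_of_le ha with h | h
      · simp only [← h, zero_smul, zero_add, smul_eq_mul]
        have : c = 1 := by linarith
        nlinarith
      · rcases eq_or_lt_of_le hc with h' | h'
        · simp only [← h', zero_smul, add_zero, smul_eq_mul]
          have : a = 1 := by linarith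
          nlinarith
        · simp only [smul_eq_mul]; nlinarith
    have h2 : Real.log (a • (ρ x ^ (1/N)) + c • (ρ y ^ (1/N)))
        ≤ Real.log (ρ (a • x + c • y) ^ (1/N)) := Real.log_le_log hcomb h1
    have h3 : a • Real.log (ρ x ^ (1/N)) + c • Real.log (ρ y ^ (1/N))
        ≤ Real.log (a • (ρ x ^ (1/N)) + c • (ρ y ^ (1/N))) :=
      strictConcaveOn_log_Ioi.concaveOn.2 hxp hyp ha hc hac
    have := hglog x hx; have := hglog y hy; have := hglog _ hz
    simp only [smul_eq_mul] at *
    nlinarith [h2, h3]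
  -- Step B : slope comparisons with L
  have hBB : (∀ x z : ℝ, 0 < x → x < z → (g z - g x) / (z - x) ≤ L x) ∧
      (∀ s x : ℝ, 0 < s → s < x → L x ≤ (g x - g s) / (x - s)) := by
    have key : ∀ x ∈ Ioi (0:ℝ),
        Tendsto (slope g x) (nhdsWithin x (Ioi x)) (nhds (L x)) := by
      intro x hx
      have := (hasDerivWithinAt_iff_tendsto_slope).mp (hL x hx)
      rwa [show Ioi x \ {x} = Ioi x by simp [diff_singleton_eq_self]] at this
    have hcv : ConvexOn ℝ (Ioi 0) (-g) := hgc.neg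
    have e2 : ∀ u v : ℝ, (-g u - -g v) / (u - v) = -((g u - g v) / (u - v)) := by
      intro u v
      rw [show (-g u - -g v) = -(g u - g v) by ring, neg_div]
    constructor
    · intro x z hx hxz
      refine ge_of_tendsto (key x hx) ?_
      have hmem : Ioo x z ∈ nhdsWithin x (Ioi x) :=
        Ioo_mem_nhdsGT_of_mem ⟨le_refl x, hxz⟩
      filter_upwards [hmem] with y hy
      have hsec := hcv.secant_mono (a := x) (x := y) (y := z)
        hx (lt_trans hx hy.1) (lt_trans hx hxz) (ne_of_gt hy.1) (ne_of_gt hxz) hy.2.le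
      simp only [Pi.neg_apply, e2] at hsec
      rw [slope_def_field]
      linarith
    · intro s x hs hsx
      have hx : (0:ℝ) < x := lt_trans hs hsx
      refine le_of_tendsto (key x hx) ?_
      filter_upwards [self_mem_nhdsWithin] with y hy
      have hy' : x < y := mem_Ioi.mp hy
      have hsec := hcv.secant_mono (a := x) (x := s) (y := y)
        hx hs (lt_trans hx hy') (ne_of_lt hsx) (ne_of_gt hy') (le_of_lt (lt_trans hsx hy'))
      simp only [Pi.neg_apply, e2] at hsec
      rw [slope_def_field]
      have e3 : (g s - g x) / (s - x) = (g x - g s) / (x - s) := by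
        rw [show g s - g x = -(g x - g s) by ring, show s - x = -(x - s) by ring,
          neg_div_neg_eq]
      rw [e3] at hsec
      linarith
  obtain ⟨hslope_le_L, hL_le_slope⟩ := hBB
  have hLanti : ∀ s x : ℝ, 0 < s → s < x → L x ≤ L s := by
    intro s x hs hsx
    exact le_trans (hL_le_slope s x hs hsx) (hslope_le_L s x hs hsx)
  -- Step C : r * L r ≤ N
  have hrL : ∀ r : ℝ, 0 < r → r * L r ≤ N := by
    intro r hr
    refine le_of_forall_pos_le_add ?_
    intro δ hδ
    set q : ℝ := r * N / (N + δ) with hq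
    have hNδ : (0:ℝ) < N + δ := by linarith
    have hq0 : 0 < q := by positivity
    have hqr : q < r := by
      rw [hq, div_lt_iff₀ hNδ]
      nlinarith
    set ε : ℝ := (r - q) / 2 with hε
    have hε0 : 0 < ε := by simp only [hε]; linarith
    set s : ℝ := q + ε with hs
    have hs0 : 0 < s := by positivity
    have hsr : s < r := by simp only [hs, hε]; linarith
    have hεs : ε < s := by simp only [hs]; linarith
    have hrs : r - s = ε := by simp only [hs, hε]; ring
    -- concavity of h at s between ε and r
    have hεmem : ε ∈ Ioi (0:ℝ) := hε0
    have hrmem : r ∈ Ioi (0:ℝ) := hr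
    have hsmem : s ∈ Ioi (0:ℝ) := hs0
    have hcomb : s = ((r - s)/(r - ε)) • ε + ((s - ε)/(r - ε)) • r := by
      have : r - ε ≠ 0 := by intro h; simp only [hε] at h; linarith
      rw [smul_eq_mul, smul_eq_mul, div_mul_eq_mul_div, div_mul_eq_mul_div, ← add_div, eq_div_iff this]
      ring
    have hlam : (0:ℝ) ≤ (r - s)/(r - ε) := by
      apply div_nonneg <;> [linarith; linarith]
    have hmu : (0:ℝ) ≤ (s - ε)/(r - ε) := by
      apply div_nonneg <;> [linarith; linarith]
    have hsum : (r - s)/(r - ε) + (s - ε)/(r - ε) = 1 := by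
      rw [← add_div, div_eq_one_iff_eq] ; ring
      intro h; linarith
    have hcc := hconc.2 hεmem hrmem hlam hmu hsum
    rw [← hcomb] at hcc
    have hlow : ((s - ε)/(r - ε)) * (ρ r ^ (1/N)) ≤ ρ s ^ (1/N) := by
      have h1 := hhpos ε hεmem
      simp only [smul_eq_mul] at hcc
      nlinarith
    -- ratio bound: h r / h s ≤ (r - ε)/(s - ε) = (r-ε)/q
    have hsε : s - ε = q := by simp only [hs]; ring
    have hhs := hhpos s hsmem
    have hhr := hhpos r hrmem
    have hratio : ρ r ^ (1/N) / ρ s ^ (1/N) ≤ (r - ε) / q := by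
      rw [div_le_div_iff₀ hhs hq0]
      rw [hsε] at hlow
      have hrε : 0 < r - ε := by linarith
      have h5 := mul_le_mul_of_nonneg_right hlow hrε.le
      have e : q / (r - ε) * (ρ r ^ (1/N)) * (r - ε) = ρ r ^ (1/N) * q := by
        field_simp
      rw [e] at h5
      linarith
    -- logs
    have hgr : g r - g s = N * Real.log (ρ r ^ (1/N) / ρ s ^ (1/N)) := by
      rw [hglog r hrmem, hglog s hsmem, Real.log_div (ne_of_gt hhr) (ne_of_gt hhs)]
      ring
    have hlogle : Real.log (ρ r ^ (1/N) / ρ s ^ (1/N)) ≤ (r - ε)/q - 1 := by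
      calc Real.log (ρ r ^ (1/N) / ρ s ^ (1/N)) ≤ ρ r ^ (1/N) / ρ s ^ (1/N) - 1 :=
            Real.log_le_sub_one_of_pos (by positivity)
        _ ≤ (r - ε)/q - 1 := by linarith
    have hεq : (r - ε)/q - 1 = ε / q := by
      rw [div_sub_one (ne_of_gt hq0)]
      congr 1
      simp only [hε, hq]
      ring
    have h3 : g r - g s ≤ N * (ε / q) := by
      rw [hgr, ← hεq]
      exact mul_le_mul_of_nonneg_left hlogle hN0.le
    have key : L r ≤ (N + δ) / r := by
      have h1 := hL_le_slope s r hs0 hsr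
      rw [hrs] at h1
      have h2 : (g r - g s) / ε ≤ N / q := by
        rw [div_le_div_iff₀ hε0 hq0]
        have hee : N * (ε / q) * q = N * ε := by field_simp
        nlinarith
      have h4 : N / q = (N + δ) / r := by
        rw [hq]
        field_simp
      linarith
    calc r * L r ≤ r * ((N + δ)/r) := mul_le_mul_of_nonneg_left key hr.le
      _ = N + δ := by field_simp
  -- Step E : interval Cauchy–Schwarz
  have hb2i : ∀ s t : ℝ, 0 < s → s < t →
      IntervalIntegrable (fun u => (b u) ^ 2) MeasureTheory.volume s t := by
    intro s t hs hst
    apply MeasureTheory.IntegrableOn.intervalIntegrable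
    rw [uIcc_of_le hst.le]
    exact hb.integrableOn_compact_subset
      (fun u hu => lt_of_lt_of_le hs hu.1) isCompact_Icc
  have hCS : ∀ s t : ℝ, 0 < s → s < t → IntervalIntegrable b MeasureTheory.volume s t →
      (∫ u in s..t, b u) ≤ Real.sqrt ((t - s) * (L s - L t)) := by
    intro s t hs hst hbi
    set I : ℝ := ∫ u in s..t, b u with hI
    set J : ℝ := ∫ u in s..t, (b u) ^ 2 with hJ
    have hd : (0:ℝ) < t - s := by linarith
    have hJ0 : 0 ≤ J := integral_nonneg hst.le (fun u _ => sq_nonneg _)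
    have hJL : J ≤ L s - L t := hb2 s t hs hst
    set c : ℝ := I / (t - s) with hc
    have hsq : 0 ≤ ∫ u in s..t, (b u - c) ^ 2 :=
      integral_nonneg hst.le (fun u _ => sq_nonneg _)
    have hexp : (∫ u in s..t, (b u - c) ^ 2) = J - 2 * c * I + c ^ 2 * (t - s) := by
      have h1 : ∀ u : ℝ, (b u - c) ^ 2 = (b u) ^ 2 - (2 * c) * b u + c ^ 2 := by
        intro u; ring
      simp_rw [h1]
      rw [intervalIntegral.integral_add, intervalIntegral.integral_sub,
        intervalIntegral.integral_const_mul, intervalIntegral.integral_const]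
      · ring_nf
        rw [hI, hJ]
        ring
      · exact hb2i s t hs hst
      · exact hbi.const_mul _
      · exact (hb2i s t hs hst).sub (hbi.const_mul _)
      · exact intervalIntegrable_const
    have hIJ : I ^ 2 ≤ (t - s) * J := by
      rw [hexp, hc] at hsq
      have h2 : J - 2 * (I / (t - s)) * I + (I / (t - s)) ^ 2 * (t - s)
          = J - I ^ 2 / (t - s) := by
        field_simp
        ring
      rw [h2] at hsq
      have h3 : I ^ 2 / (t - s) ≤ J := by linarith
      rw [div_le_iff₀ hd] at h3
      nlinarith [h3]
    calc I ≤ |I| := le_abs_self I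
      _ = Real.sqrt (I ^ 2) := (Real.sqrt_sq_eq_abs I).symm
      _ ≤ Real.sqrt ((t - s) * (L s - L t)) := by
        apply Real.sqrt_le_sqrt
        calc I ^ 2 ≤ (t - s) * J := hIJ
          _ ≤ (t - s) * (L s - L t) := mul_le_mul_of_nonneg_left hJL hd.le
  -- Final argument
  rw [tendsto_atTop]
  intro K₀
  set K : ℝ := max K₀ 1 with hKdef
  have hK1 : (1:ℝ) ≤ K := le_max_right _ _
  have hK0 : (0:ℝ) < K := lt_of_lt_of_le one_pos hK1
  have hf1 : 0 < f 1 := hfpos 1 (mem_Ioi.mpr one_pos)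
  set C : ℝ := N + |L 1| + g 1 with hCdef
  set M : ℝ := 3 + C + 2 * (Real.log K - Real.log (f 1)) with hMdef
  set δ : ℝ := min (Real.exp (-1)) (f 1 / K) with hδdef
  have hδ0 : 0 < δ := lt_min (Real.exp_pos _) (div_pos hf1 hK0)
  have hmem : Ioo (0:ℝ) δ ∈ nhdsWithin 0 (Ioi 0) :=
    Ioo_mem_nhdsGT_of_mem ⟨le_refl 0, hδ0⟩
  filter_upwards [hmem, (tendsto_atTop.mp hρsuper) (Real.exp M)] with r hrmem hρr
  have hr0 : 0 < r := hrmem.1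
  have hrδ : r < δ := hrmem.2
  have hre : r < Real.exp (-1) := lt_of_lt_of_le hrδ (min_le_left _ _)
  have hr1 : r < 1 := lt_trans hre (by
    rw [show (1:ℝ) = Real.exp 0 by rw [Real.exp_zero]]
    exact Real.exp_lt_exp.mpr (by norm_num))
  have hfr : 0 < f r := hfpos r hr0
  have hKK : K₀ ≤ K := le_max_left _ _
  have main : K ≤ f r / r := by
    by_cases hbi : IntervalIntegrable b MeasureTheory.volume r 1
    case neg =>
      have h0 : Real.log (f 1) - Real.log (f r) = 0 := by
        rw [hlog r 1 hr0 hr1, integral_undef hbi]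
      have hfreq : f r = f 1 := by
        have : Real.log (f r) = Real.log (f 1) := by linarith
        have := Real.log_injOn_pos (mem_Ioi.mpr hfr) (mem_Ioi.mpr hf1) this
        exact this
      rw [hfreq, le_div_iff₀ hr0]
      have hrK : r < f 1 / K := lt_of_lt_of_le hrδ (min_le_right _ _)
      rw [lt_div_iff₀ hK0] at hrK
      linarith
    case pos =>
      -- main estimate
      set x : ℝ := -Real.log r with hxdef
      have hx1 : 1 < x := by
        have := Real.log_lt_log hr0 hre
        rw [Real.log_exp] at this
        simp only [hxdef]; linarith
      have hx0 : (0:ℝ) < x := by linarith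
      set n : ℕ := ⌈x ^ 2⌉₊ with hndef
      have hn2 : x ^ 2 ≤ (n:ℝ) := Nat.le_ceil _
      have hn1 : 1 ≤ n := Nat.one_le_ceil_iff.mpr (by positivity)
      have hn0R : (0:ℝ) < n := by
        have : (0:ℝ) < x ^ 2 := by positivity
        linarith
      set t : ℕ → ℝ := fun k => r ^ (((n:ℝ) - k)/n) with htdef
      set q : ℝ := r ^ (-(1:ℝ)/(n:ℝ)) with hqdef
      have htpos : ∀ k, 0 < t k := fun k => Real.rpow_pos_of_pos hr0 _
      have ht0 : t 0 = r := by
        simp only [htdef]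
        rw [show ((n:ℝ) - (0:ℕ))/n = 1 by push_cast; field_simp; ring, Real.rpow_one]
      have htn : t n = 1 := by
        simp only [htdef]
        rw [show ((n:ℝ) - (n:ℕ))/n = 0 by push_cast; field_simp; ring, Real.rpow_zero]
      have htq : ∀ k : ℕ, t (k+1) = t k * q := by
        intro k
        simp only [htdef, hqdef]
        rw [← Real.rpow_add hr0]
        congr 1
        push_cast
        field_simp
        ring
      have hq1 : 1 ≤ q :=
        Real.one_le_rpow_of_pos_of_le_one_of_nonpos hr0 hr1.le
          (by rw [neg_div]; exact neg_nonpos.mpr (by positivity))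
      have ht_lt : ∀ k : ℕ, t k < t (k+1) := by
        intro k
        simp only [htdef]
        apply Real.rpow_lt_rpow_of_exponent_gt hr0 hr1
        rw [div_lt_div_iff₀ hn0R hn0R]
        push_cast
        nlinarith
      have htle1 : ∀ k, k ≤ n → t k ≤ 1 := by
        intro k hk
        apply Real.rpow_le_one hr0.le hr1.le
        apply div_nonneg _ hn0R.le
        have : (k:ℝ) ≤ n := by exact_mod_cast hk
        linarith
      have htger : ∀ k, k ≤ n → r ≤ t k := by
        intro k hk
        have h := Real.rpow_le_rpow_of_exponent_ge hr0 hr1.le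
          (show ((n:ℝ) - k)/n ≤ 1 by
            rw [div_le_one hn0R]
            have : (0:ℝ) ≤ k := Nat.cast_nonneg _
            linarith)
        rwa [Real.rpow_one] at h
      have hsub : ∀ k, k < n → IntervalIntegrable b MeasureTheory.volume (t k) (t (k+1)) := by
        intro k hk
        apply hbi.mono_set
        rw [uIcc_of_le (ht_lt k).le, uIcc_of_le hr1.le]
        exact Icc_subset_Icc (htger k hk.le) (htle1 (k+1) hk)
      have hsplit : (∫ u in r..1, b u)
          = ∑ k ∈ Finset.range n, ∫ u in (t k)..(t (k+1)), b u := by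
        rw [intervalIntegral.sum_integral_adjacent_intervals hsub, ht0, htn]
      set a : ℕ → ℝ := fun k => t k * (L (t k) - L (t (k+1))) with hadef
      have ha0 : ∀ k, 0 ≤ a k := by
        intro k
        apply mul_nonneg (htpos k).le
        have := hLanti (t k) (t (k+1)) (htpos k) (ht_lt k)
        linarith
      set S : ℝ := ∑ k ∈ Finset.range n, a k with hSdef
      have hS0 : 0 ≤ S := Finset.sum_nonneg (fun k _ => ha0 k)
      -- per-term bound and sum
      have hterm : ∀ k, k < n → (∫ u in (t k)..(t (k+1)), b u)
          ≤ Real.sqrt (q - 1) * Real.sqrt (a k) := by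
        intro k hk
        have h1 := hCS (t k) (t (k+1)) (htpos k) (ht_lt k) (hsub k hk)
        have h2 : (t (k+1) - t k) * (L (t k) - L (t (k+1))) = (q - 1) * a k := by
          simp only [hadef]
          rw [show t (k+1) - t k = t k * (q - 1) by rw [htq k]; ring]
          ring
        rwa [h2, Real.sqrt_mul (by linarith) _] at h1
      have hBsum : (∫ u in r..1, b u)
          ≤ Real.sqrt (q - 1) * ∑ k ∈ Finset.range n, Real.sqrt (a k) := by
        rw [hsplit, Finset.mul_sum]
        exact Finset.sum_le_sum (fun k hk => hterm k (Finset.mem_range.mp hk))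
      have hsqrt_sum : (∑ k ∈ Finset.range n, Real.sqrt (a k))
          ≤ Real.sqrt ((n:ℝ) * S) := by
        rw [Real.le_sqrt (Finset.sum_nonneg (fun k _ => Real.sqrt_nonneg _))
          (by positivity)]
        calc (∑ k ∈ Finset.range n, Real.sqrt (a k)) ^ 2
            ≤ ((Finset.range n).card : ℝ) * ∑ k ∈ Finset.range n, (Real.sqrt (a k)) ^ 2 :=
              sq_sum_le_card_mul_sum_sq
          _ = (n:ℝ) * S := by
              rw [Finset.card_range]
              congr 1
              apply Finset.sum_congr rfl
              intro k _
              exact Real.sq_sqrt (ha0 k)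
      -- Abel summation bound : S ≤ C - g r
      have hAbel : S ≤ C - g r := by
        have hdecomp : ∀ k : ℕ, a k =
            (t k * L (t k) - t (k+1) * L (t (k+1)))
            + (t (k+1) - t k) * L (t (k+1)) := by
          intro k; simp only [hadef]; ring
        have hS_eq : S = (t 0 * L (t 0) - t n * L (t n))
            + ∑ k ∈ Finset.range n, (t (k+1) - t k) * L (t (k+1)) := by
          simp only [hSdef]
          rw [← Finset.sum_range_sub' (fun k => t k * L (t k)) n, ← Finset.sum_add_distrib]
          exact Finset.sum_congr rfl (fun k _ => hdecomp k)
        have hterm2 : ∀ k : ℕ, (t (k+1) - t k) * L (t (k+1)) ≤ g (t (k+1)) - g (t k) := by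
          intro k
          have h := hL_le_slope (t k) (t (k+1)) (htpos k) (ht_lt k)
          rw [le_div_iff₀ (by linarith [ht_lt k])] at h
          linarith [h]
        have hsum2 : (∑ k ∈ Finset.range n, (t (k+1) - t k) * L (t (k+1)))
            ≤ g (t n) - g (t 0) := by
          rw [← Finset.sum_range_sub (fun k => g (t k)) n]
          exact Finset.sum_le_sum (fun k _ => hterm2 k)
        rw [ht0, htn] at hsum2
        rw [hS_eq, ht0, htn]
        have h3 := hrL r hr0
        have h5 : -L 1 ≤ |L 1| := neg_le_abs _
        simp only [hCdef]
        linarith [hsum2]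
      -- lower bound for g r
      have hgr_low : M + Real.log r ≤ g r := by
        have h1 : Real.exp M ≤ ρ r / r := hρr
        have h2 : 0 < ρ r / r := lt_of_lt_of_le (Real.exp_pos _) h1
        have h3 : M ≤ Real.log (ρ r / r) := by
          rw [← Real.log_exp M]
          exact Real.log_le_log (Real.exp_pos _) h1
        have h4 : g r = Real.log (ρ r / r) + Real.log r := by
          rw [hgdef]
          rw [← Real.log_mul (ne_of_gt h2) (ne_of_gt hr0)]
          congr 1
          field_simp
        linarith
      -- bound on n * (q - 1)
      have hq_exp : q = Real.exp (x / n) := by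
        rw [hqdef, Real.rpow_def_of_pos hr0]
        congr 1
        simp only [hxdef]
        field_simp
      have hvev : ∀ v : ℝ, 0 ≤ v → Real.exp v - 1 ≤ v * Real.exp v := by
        intro v hv
        have h := Real.add_one_le_exp (-v)
        have h2 : Real.exp (-v) * Real.exp v = 1 := by
          rw [← Real.exp_add]; simp
        nlinarith [Real.exp_pos v, Real.exp_pos (-v)]
      have hxn : x / n ≤ 1 / x := by
        have h1 : x / n ≤ x / x ^ 2 :=
          div_le_div_of_nonneg_left hx0.le (by positivity) hn2
        have h2 : x / x ^ 2 = 1 / x := by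
          field_simp
        linarith
      have hq_bound : (n:ℝ) * (q - 1) ≤ x + 3 := by
        have he3 : Real.exp (1 / x) ≤ 3 := by
          have h1 : (1:ℝ)/x ≤ 1 := by
            rw [div_le_one hx0]; linarith
          calc Real.exp (1/x) ≤ Real.exp 1 := Real.exp_le_exp.mpr h1
            _ ≤ 3 := by linarith [Real.exp_one_lt_d9]
        have h1 : q - 1 ≤ (x / n) * Real.exp (x / n) := by
          rw [hq_exp]
          exact hvev _ (by positivity)
        have h2 : Real.exp (x / n) ≤ Real.exp (1 / x) := Real.exp_le_exp.mpr hxn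
        have h3 : (n:ℝ) * (q - 1) ≤ x * Real.exp (1 / x) := by
          calc (n:ℝ) * (q - 1) ≤ (n:ℝ) * ((x / n) * Real.exp (x / n)) := by
                apply mul_le_mul_of_nonneg_left h1 hn0R.le
            _ = x * Real.exp (x / n) := by field_simp
            _ ≤ x * Real.exp (1 / x) := by
                apply mul_le_mul_of_nonneg_left h2 hx0.le
        have h4 : Real.exp (1/x) - 1 ≤ (1/x) * Real.exp (1/x) := hvev _ (by positivity)
        have h5 : x * Real.exp (1/x) ≤ x + 3 := by
          have h6 : (1/x) * Real.exp (1/x) ≤ (1/x) * 3 :=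
            mul_le_mul_of_nonneg_left he3 (by positivity)
          have h7 : x * ((1/x) * 3) = 3 := by field_simp
          nlinarith [h4, h6]
        linarith
      -- assemble
      set Y : ℝ := x + C - M with hYdef
      have hSY : S ≤ Y := by
        have := hgr_low
        simp only [hYdef, hxdef] at *
        linarith [hAbel]
      have hY0 : 0 ≤ Y := le_trans hS0 hSY
      have hB2 : (∫ u in r..1, b u) ≤ Real.sqrt ((x + 3) * Y) := by
        calc (∫ u in r..1, b u)
            ≤ Real.sqrt (q - 1) * Real.sqrt ((n:ℝ) * S) := by
              apply le_trans hBsum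
              apply mul_le_mul_of_nonneg_left hsqrt_sum (Real.sqrt_nonneg _)
          _ = Real.sqrt ((q - 1) * ((n:ℝ) * S)) := (Real.sqrt_mul (by linarith) _).symm
          _ ≤ Real.sqrt ((x + 3) * Y) := by
              apply Real.sqrt_le_sqrt
              calc (q - 1) * ((n:ℝ) * S) = ((n:ℝ) * (q - 1)) * S := by ring
                _ ≤ (x + 3) * S := mul_le_mul_of_nonneg_right hq_bound hS0
                _ ≤ (x + 3) * Y := mul_le_mul_of_nonneg_left hSY (by linarith)
      have hAMGM : Real.sqrt ((x + 3) * Y) ≤ ((x + 3) + Y) / 2 := by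
        have h1 : (x + 3) * Y ≤ (((x + 3) + Y)/2) ^ 2 := by nlinarith [sq_nonneg ((x+3) - Y)]
        calc Real.sqrt ((x + 3) * Y) ≤ Real.sqrt ((((x + 3) + Y)/2) ^ 2) :=
              Real.sqrt_le_sqrt h1
          _ = ((x + 3) + Y)/2 := by
              rw [Real.sqrt_sq (by linarith)]
      have hfinal : Real.log (f 1) - Real.log (f r) ≤ x + (3 + C - M) / 2 := by
        rw [hlog r 1 hr0 hr1]
        calc (∫ u in r..1, b u) ≤ ((x + 3) + Y)/2 := le_trans hB2 hAMGM
          _ = x + (3 + C - M)/2 := by simp only [hYdef]; ring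
      have hMval : (3 + C - M)/2 = Real.log (f 1) - Real.log K := by
        simp only [hMdef]; ring
      have hlogfr : Real.log K + Real.log r ≤ Real.log (f r) := by
        rw [hMval] at hfinal
        simp only [hxdef] at hfinal
        linarith
      have hKr : K * r ≤ f r := by
        rw [← Real.log_le_log_iff (by positivity) hfr, Real.log_mul (ne_of_gt hK0) (ne_of_gt hr0)]
        exact hlogfr
      rw [le_div_iff₀ hr0]
      exact hKr
  linarith
end

section
/- Let f, ρ : (0,∞) → (0,∞) and let C ∈ ℝ. Suppose that for every r ∈ (0,1) one has log f(1) − log f(r) ≤ √(log(1/r)) · √(C − log ρ(r)), where √x is interpreted as 0 when x < 0. If ρ(r)/r → ∞ as r → 0⁺, then f(r)/r → ∞ as r → 0⁺. -/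
open Set Filter

/-- **Concluding contradiction argument of Lemma fSuperlinear.** Let
`f, ρ : (0,∞) → (0,∞)` and `C ∈ ℝ` be such that for all `r ∈ (0,1)`,
`log f(1) − log f(r) ≤ √(log(1/r)) · √(C − log ρ(r))` (with `√x = 0` for
`x < 0`). If `ρ(r)/r → ∞` as `r → 0⁺`, then `f(r)/r → ∞` as `r → 0⁺`. -/
theorem superlinear_of_sqrt_log_estimate
    (f ρ : ℝ → ℝ) (C : ℝ)
    (hfpos : ∀ r ∈ Ioi (0:ℝ), 0 < f r)
    (hρpos : ∀ r ∈ Ioi (0:ℝ), 0 < ρ r)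
    (hest : ∀ r ∈ Ioo (0:ℝ) 1,
      Real.log (f 1) - Real.log (f r) ≤
        Real.sqrt (Real.log (1 / r)) * Real.sqrt (C - Real.log (ρ r)))
    (hρsuper : Tendsto (fun r : ℝ => ρ r / r) (nhdsWithin 0 (Ioi 0)) atTop) :
    Tendsto (fun r : ℝ => f r / r) (nhdsWithin 0 (Ioi 0)) atTop := by
  rw [tendsto_atTop]
  intro b
  set M : ℝ := max b 1 with hMdef
  have hM1 : (1:ℝ) ≤ M := le_max_right _ _
  have hM0 : (0:ℝ) < M := lt_of_lt_of_le one_pos hM1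
  set A : ℝ := Real.log (f 1) - Real.log M with hAdef
  set K : ℝ := Real.exp (C - 2 * A) with hKdef
  have hev1 : ∀ᶠ r in nhdsWithin (0:ℝ) (Ioi 0), K < ρ r / r :=
    hρsuper.eventually_gt_atTop K
  have hmin : (0:ℝ) < min 1 (Real.exp A) := lt_min one_pos (Real.exp_pos _)
  have hev2 : Ioo (0:ℝ) (min 1 (Real.exp A)) ∈ nhdsWithin (0:ℝ) (Ioi 0) :=
    Ioo_mem_nhdsGT_of_mem ⟨le_refl _, hmin⟩
  filter_upwards [hev1, hev2] with r hKr hr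
  have hr0 : (0:ℝ) < r := hr.1
  have hr1 : r < 1 := lt_of_lt_of_le hr.2 (min_le_left _ _)
  have hrA : r < Real.exp A := lt_of_lt_of_le hr.2 (min_le_right _ _)
  have hlogrA : Real.log r < A := (Real.log_lt_iff_lt_exp hr0).mpr hrA
  by_contra hcon
  push_neg at hcon
  have hcon' : f r / r < M := lt_of_lt_of_le hcon (le_max_left _ _)
  have hfr : f r < M * r := (div_lt_iff₀ hr0).mp hcon'
  have hfr0 : 0 < f r := hfpos r hr0
  have hρr0 : 0 < ρ r := hρpos r hr0
  have hlogf : Real.log (f r) < Real.log M + Real.log r := by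
    calc Real.log (f r) < Real.log (M * r) := Real.log_lt_log hfr0 hfr
    _ = Real.log M + Real.log r := Real.log_mul (ne_of_gt hM0) (ne_of_gt hr0)
  set t : ℝ := -Real.log r with htdef
  have ht0 : 0 < t := by
    have : Real.log r < 0 := Real.log_neg hr0 hr1
    linarith
  set s : ℝ := C - Real.log (ρ r) with hsdef
  have hlog1r : Real.log (1 / r) = t := by
    rw [one_div, Real.log_inv]
  have hest' := hest r ⟨hr0, hr1⟩
  rw [hlog1r] at hest'
  have hAt : A + t < Real.sqrt t * Real.sqrt s := by
    have : A + t < Real.log (f 1) - Real.log (f r) := by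
      simp only [hAdef, htdef]; linarith
    linarith
  have hAt0 : 0 < A + t := by linarith
  have hs0 : 0 < s := by
    by_contra hs
    push_neg at hs
    rw [Real.sqrt_eq_zero_of_nonpos hs, mul_zero] at hAt
    linarith
  have hsq : (A + t) ^ 2 ≤ t * s := by
    have h1 : Real.sqrt t * Real.sqrt s = Real.sqrt (t * s) :=
      (Real.sqrt_mul ht0.le s).symm
    rw [h1] at hAt
    have h2 : (A + t) ^ 2 ≤ Real.sqrt (t * s) ^ 2 :=
      pow_le_pow_left₀ hAt0.le hAt.le 2
    rwa [Real.sq_sqrt (mul_nonneg ht0.le hs0.le)] at h2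
  have hst : t + 2 * A ≤ s := by nlinarith [sq_nonneg A]
  have hlogρ : Real.log (ρ r) ≤ C - 2 * A + Real.log r := by
    simp only [hsdef, htdef] at hst
    linarith
  have hρle : ρ r ≤ K * r := by
    calc ρ r = Real.exp (Real.log (ρ r)) := (Real.exp_log hρr0).symm
    _ ≤ Real.exp (C - 2 * A + Real.log r) := Real.exp_le_exp.mpr hlogρ
    _ = K * r := by rw [Real.exp_add, Real.exp_log hr0]
  have : ρ r / r ≤ K := (div_le_iff₀ hr0).mpr hρle
  linarith
end
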